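/- Let P be a non-constant polynomial, X = {(x,y,z) ∈ ℂ³ : x·y = P(z)} the associated Danielewski surface, and D ⊆ X a subset whose intersection with every compact subset of ℂ³ is finite. Then there exist subsets D₁, D₂ with D = D₁ ∪ D₂ such that for every R > 0 both sets {(x,y,z) ∈ D₁ : |x| ≤ R} and {(x,y,z) ∈ D₂ : |y| ≤ R} are finite; i.e. the coordinate projection (x,y,z) ↦ x is proper on D₁ and the projection (x,y,z) ↦ y is proper on D₂. -/

import Mathlib

open Polynomial

lemma aux_bound (P : Polynomial ℂ) (hP : 0 < P.natDegree) (C : ℝ) :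
    ∃ M : ℝ, ∀ z : ℂ, ‖P.eval z‖ ≤ C → ‖z‖ ≤ M := by
  have hdeg : 0 < P.degree := natDegree_pos_iff_degree_pos.mp hP
  have ht : Filter.Tendsto (fun z : ℂ => ‖P.eval z‖) (Filter.cocompact ℂ) Filter.atTop :=
    P.tendsto_norm_atTop hdeg tendsto_norm_cocompact_atTop
  have hev : ∀ᶠ z in Filter.cocompact ℂ, C < ‖P.eval z‖ :=
    ht.eventually (Filter.eventually_gt_atTop C)
  obtain ⟨K, hK, hKsub⟩ := Filter.mem_cocompact.mp hev
  obtain ⟨M, hM⟩ := hK.isBounded.subset_closedBall 0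
  refine ⟨M, fun z hz => ?_⟩
  by_contra h
  have : z ∈ Kᶜ := fun hzK => h (by simpa using hM hzK)
  exact absurd hz (not_le.mpr (hKsub this))

theorem stmt10 (P : Polynomial ℂ) (hP : 0 < P.natDegree)
    (D : Set (ℂ × ℂ × ℂ))
    (hDX : ∀ p ∈ D, p.1 * p.2.1 = P.eval p.2.2)
    (hD : ∀ K : Set (ℂ × ℂ × ℂ), IsCompact K → (D ∩ K).Finite) :
    ∃ D₁ D₂ : Set (ℂ × ℂ × ℂ), D₁ ⊆ D ∧ D₂ ⊆ D ∧ D = D₁ ∪ D₂ ∧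
      (∀ R : ℝ, 0 < R → {p ∈ D₁ | ‖p.1‖ ≤ R}.Finite) ∧
      (∀ R : ℝ, 0 < R → {p ∈ D₂ | ‖p.2.1‖ ≤ R}.Finite) := by
  refine ⟨{p ∈ D | ‖p.2.1‖ ≤ ‖p.1‖}, {p ∈ D | ‖p.1‖ ≤ ‖p.2.1‖},
    fun p hp => hp.1, fun p hp => hp.1, ?_, ?_, ?_⟩
  · ext p
    simp only [Set.mem_union, Set.mem_setOf_eq]
    constructor
    · intro hp
      rcases le_total ‖p.2.1‖ ‖p.1‖ with h | h
      · exact Or.inl ⟨hp, h⟩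
      · exact Or.inr ⟨hp, h⟩
    · rintro (⟨h, _⟩ | ⟨h, _⟩) <;> exact h
  · intro R hR
    obtain ⟨M, hM⟩ := aux_bound P hP (R * R)
    have hK : IsCompact ((Metric.closedBall (0:ℂ) R) ×ˢ
        (Metric.closedBall (0:ℂ) R) ×ˢ (Metric.closedBall (0:ℂ) M)) :=
      (isCompact_closedBall _ _).prod ((isCompact_closedBall _ _).prod
        (isCompact_closedBall _ _))
    refine (hD _ hK).subset ?_
    rintro p ⟨⟨hpD, hyx⟩, hx⟩
    have hy : ‖p.2.1‖ ≤ R := hyx.trans hx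
    have hz : ‖p.2.2‖ ≤ M := by
      apply hM
      rw [← hDX p hpD, norm_mul]
      exact mul_le_mul hx hy (norm_nonneg _) hR.le
    exact ⟨hpD, by simpa [Metric.mem_closedBall, dist_eq_norm] using ⟨hx, hy, hz⟩⟩
  · intro R hR
    obtain ⟨M, hM⟩ := aux_bound P hP (R * R)
    have hK : IsCompact ((Metric.closedBall (0:ℂ) R) ×ˢ
        (Metric.closedBall (0:ℂ) R) ×ˢ (Metric.closedBall (0:ℂ) M)) :=
      (isCompact_closedBall _ _).prod ((isCompact_closedBall _ _).prod
        (isCompact_closedBall _ _))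
    refine (hD _ hK).subset ?_
    rintro p ⟨⟨hpD, hxy⟩, hy⟩
    have hx : ‖p.1‖ ≤ R := hxy.trans hy
    have hz : ‖p.2.2‖ ≤ M := by
      apply hM
      rw [← hDX p hpD, norm_mul]
      exact mul_le_mul hx hy (norm_nonneg _) hR.le
    exact ⟨hpD, by simpa [Metric.mem_closedBall, dist_eq_norm] using ⟨hx, hy, hz⟩⟩
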